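/- Let $S$ be uniform on $[0,1]$ and $Y$ uniform on the sphere $\mathbb{S}^{d-1}$, independent. Let $t>\frac12\sqrt d$, $x_0'\in\mathbb{T}^d$, $y_0\in\mathbb{S}^{d-1}$. Then there exists $c_2>0$ depending only on $d$ such that for every $u\in\mathbb{T}^d$ and $\delta\in(0,1)$: $\mathbb{P}\big(|x_0'+tSy_0+t(1-S)Y-u|\le\delta\big)\ge c_2\delta^d$, where $|\cdot|$ is the distance on the torus $\mathbb{T}^d=(\mathbb{R}/\mathbb{Z})^d$. -/

import Mathlib

open MeasureTheory ProbabilityTheory Real Set Metric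


/-- Lower bound for Hausdorff measure of a Euclidean closed ball. -/
lemma hm_ball_lower (m : ℕ) (r : ℝ) (hr : 0 ≤ r) :
    ENNReal.ofReal ((2 * (r / Real.sqrt m)) ^ m) ≤
      μH[(m : ℕ)] (Metric.closedBall (0 : EuclideanSpace ℝ (Fin m)) r) := by
  rcases Nat.eq_zero_or_pos m with hm | hm
  · subst hm
    simp only [pow_zero]
    calc ENNReal.ofReal 1 = 1 := by simp
    _ ≤ μH[(0:ℕ)] (Metric.closedBall (0 : EuclideanSpace ℝ (Fin 0)) r) := by
        rw [Nat.cast_zero]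
        exact MeasureTheory.Measure.one_le_hausdorffMeasure_zero_of_nonempty
          (X := EuclideanSpace ℝ (Fin 0)) ⟨0, Metric.mem_closedBall_self hr⟩
  · have hsm : (0:ℝ) < Real.sqrt m := Real.sqrt_pos.2 (by exact_mod_cast hm)
    set g := ⇑(WithLp.equiv 2 (Fin m → ℝ)) with hg
    have hlip : LipschitzWith 1 g := PiLp.lipschitzWith_ofLp 2 _
    have halip : AntilipschitzWith ((Fintype.card (Fin m) : NNReal) ^ (1 / (2:ENNReal)).toReal) g :=
      PiLp.antilipschitzWith_ofLp 2 _
    -- the image of the euclidean ball contains the sup-norm ball of radius r/√m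
    have hsub : Metric.closedBall (0 : Fin m → ℝ) (r / Real.sqrt m) ⊆
        g '' Metric.closedBall (0 : EuclideanSpace ℝ (Fin m)) r := by
      intro x hx
      refine ⟨(WithLp.equiv 2 (Fin m → ℝ)).symm x, ?_, by simp [hg]⟩
      rw [Metric.mem_closedBall] at hx ⊢
      have := halip.le_mul_dist ((WithLp.equiv 2 (Fin m → ℝ)).symm x) 0
      have hK : ((Fintype.card (Fin m) : NNReal) ^ (1 / (2:ENNReal)).toReal : ℝ) = Real.sqrt m := by
        simp [Real.sqrt_eq_rpow]
      calc dist ((WithLp.equiv 2 (Fin m → ℝ)).symm x) 0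
          ≤ Real.sqrt m * dist (g ((WithLp.equiv 2 (Fin m → ℝ)).symm x)) (g 0) := by
            rw [← hK]; exact this
        _ = Real.sqrt m * dist x 0 := by simp [hg]
        _ ≤ Real.sqrt m * (r / Real.sqrt m) := by
            exact mul_le_mul_of_nonneg_left hx hsm.le
        _ = r := by field_simp
    calc ENNReal.ofReal ((2 * (r / Real.sqrt m)) ^ m)
        = volume (Metric.closedBall (0 : Fin m → ℝ) (r / Real.sqrt m)) := by
          rw [Real.volume_pi_closedBall _ (by positivity)]
          simp
      _ = μH[(Fintype.card (Fin m) : ℕ)] (Metric.closedBall (0 : Fin m → ℝ) (r / Real.sqrt m)) := by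
          rw [MeasureTheory.hausdorffMeasure_pi_real]
      _ ≤ μH[(m:ℕ)] (g '' Metric.closedBall (0 : EuclideanSpace ℝ (Fin m)) r) := by
          rw [Fintype.card_fin]; exact measure_mono hsub
      _ ≤ μH[(m:ℕ)] (Metric.closedBall (0 : EuclideanSpace ℝ (Fin m)) r) := by
          simpa using hlip.hausdorffMeasure_image_le (by positivity)
            (Metric.closedBall (0 : EuclideanSpace ℝ (Fin m)) r)

/-- Finiteness for Hausdorff measure of a Euclidean closed ball. -/
lemma hm_ball_finite (m : ℕ) (r : ℝ) (hr : 0 ≤ r) :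
    μH[(m : ℕ)] (Metric.closedBall (0 : EuclideanSpace ℝ (Fin m)) r) < ⊤ := by
  set g := ⇑(WithLp.equiv 2 (Fin m → ℝ)) with hg
  have hlip : LipschitzWith 1 g := PiLp.lipschitzWith_ofLp 2 _
  have halip : AntilipschitzWith ((Fintype.card (Fin m) : NNReal) ^ (1 / (2:ENNReal)).toReal) g :=
    PiLp.antilipschitzWith_ofLp 2 _
  have h1 : μH[(m:ℕ)] (Metric.closedBall (0 : EuclideanSpace ℝ (Fin m)) r) ≤
      ((Fintype.card (Fin m) : NNReal) ^ (1 / (2:ENNReal)).toReal : NNReal) ^ (m:ℝ) *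
        μH[(m:ℕ)] (g '' Metric.closedBall (0 : EuclideanSpace ℝ (Fin m)) r) :=
    halip.le_hausdorffMeasure_image (by positivity) _
  have h2 : g '' Metric.closedBall (0 : EuclideanSpace ℝ (Fin m)) r ⊆
      Metric.closedBall (0 : Fin m → ℝ) r := by
    rintro x ⟨y, hy, rfl⟩
    rw [Metric.mem_closedBall] at hy ⊢
    calc dist (g y) 0 = dist (g y) (g 0) := by simp [hg]
      _ ≤ dist y 0 := by simpa using hlip.dist_le_mul y 0
      _ ≤ r := hy
  have h3 : μH[(m:ℕ)] (g '' Metric.closedBall (0 : EuclideanSpace ℝ (Fin m)) r) ≤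
      ENNReal.ofReal ((2*r)^m) := by
    calc μH[(m:ℕ)] (g '' Metric.closedBall (0 : EuclideanSpace ℝ (Fin m)) r)
        ≤ μH[(m:ℕ)] (Metric.closedBall (0 : Fin m → ℝ) r) := measure_mono h2
      _ = volume (Metric.closedBall (0 : Fin m → ℝ) r) := by
          rw [← MeasureTheory.hausdorffMeasure_pi_real]; simp
      _ = ENNReal.ofReal ((2*r)^m) := by rw [Real.volume_pi_closedBall _ hr]; simp
  calc μH[(m:ℕ)] (Metric.closedBall (0 : EuclideanSpace ℝ (Fin m)) r)
      ≤ _ * μH[(m:ℕ)] (g '' Metric.closedBall (0 : EuclideanSpace ℝ (Fin m)) r) := h1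
    _ ≤ _ * ENNReal.ofReal ((2*r)^m) := by exact mul_le_mul_right h3 _
    _ < ⊤ := by
        apply ENNReal.mul_lt_top _ ENNReal.ofReal_lt_top
        exact ENNReal.rpow_lt_top_of_nonneg (by positivity) ENNReal.coe_ne_top


lemma sqrt_diff_le {a b : ℝ} (ha : 0 ≤ a) (hb : 0 ≤ b) (h1 : 1 ≤ Real.sqrt a + Real.sqrt b) :
    |Real.sqrt a - Real.sqrt b| ≤ |a - b| := by
  have h2 : (Real.sqrt a - Real.sqrt b) * (Real.sqrt a + Real.sqrt b) = a - b := by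
    have := Real.sq_sqrt ha
    have := Real.sq_sqrt hb
    nlinarith
  calc |Real.sqrt a - Real.sqrt b| = |Real.sqrt a - Real.sqrt b| * 1 := by ring
    _ ≤ |Real.sqrt a - Real.sqrt b| * (Real.sqrt a + Real.sqrt b) := by
        exact mul_le_mul_of_nonneg_left h1 (abs_nonneg _)
    _ = |(Real.sqrt a - Real.sqrt b) * (Real.sqrt a + Real.sqrt b)| := by
        rw [abs_mul, abs_of_nonneg (by linarith [Real.sqrt_nonneg a, Real.sqrt_nonneg b] : (0:ℝ) ≤ Real.sqrt a + Real.sqrt b)]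
    _ = |a - b| := by rw [h2]

section Sphere

variable {m : ℕ}

variable (y₁ : EuclideanSpace ℝ (Fin (m+1))) (hy : ‖y₁‖ = 1)

/-- graph map over the orthogonal complement -/
noncomputable def sphGraph (w : (Submodule.span ℝ {y₁})ᗮ) : EuclideanSpace ℝ (Fin (m+1)) :=
  (w : EuclideanSpace ℝ (Fin (m+1))) + Real.sqrt (1 - ‖w‖^2) • y₁

lemma inner_perp {w : (Submodule.span ℝ {y₁})ᗮ} : inner (𝕜 := ℝ) y₁ (w : EuclideanSpace ℝ (Fin (m+1))) = 0 := by
  have := w.2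
  rw [Submodule.mem_orthogonal] at this
  exact this y₁ (Submodule.mem_span_singleton_self y₁)

include hy in
lemma sphGraph_norm {w : (Submodule.span ℝ {y₁})ᗮ} (hw : ‖w‖ ≤ 1) : ‖sphGraph y₁ w‖ = 1 := by
  have h0 : (0:ℝ) ≤ 1 - ‖w‖^2 := by nlinarith [norm_nonneg w]
  have hperp : inner (𝕜 := ℝ) (w : EuclideanSpace ℝ (Fin (m+1))) (Real.sqrt (1 - ‖w‖^2) • y₁) = 0 := by
    rw [real_inner_smul_right, real_inner_comm, inner_perp]; ring
  have : ‖sphGraph y₁ w‖^2 = 1 := by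
    rw [sphGraph, norm_add_sq_real, hperp]
    rw [norm_smul, Real.norm_eq_abs, abs_of_nonneg (Real.sqrt_nonneg _), hy]
    have := Real.sq_sqrt h0
    have : (Real.sqrt (1 - ‖w‖^2))^2 = 1 - ‖w‖^2 := this
    rw [mul_pow, this]
    have : ‖(w : EuclideanSpace ℝ (Fin (m+1)))‖ = ‖w‖ := rfl
    rw [this]; ring
  calc ‖sphGraph y₁ w‖ = Real.sqrt (‖sphGraph y₁ w‖^2) := (Real.sqrt_sq (norm_nonneg _)).symm
    _ = 1 := by rw [this, Real.sqrt_one]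

include hy in
lemma sphGraph_dist {w : (Submodule.span ℝ {y₁})ᗮ} {ρ : ℝ} (hρ : 0 < ρ) (hρ1 : ρ ≤ 1)
    (hw : ‖w‖ ≤ ρ / 2) : ‖sphGraph y₁ w - y₁‖ ≤ ρ := by
  have hw1 : ‖w‖ ≤ 1 := by linarith
  have h0 : (0:ℝ) ≤ 1 - ‖w‖^2 := by nlinarith [norm_nonneg w]
  set c := Real.sqrt (1 - ‖w‖^2) with hc
  have hc1 : c ≤ 1 := by
    rw [hc]
    calc Real.sqrt (1 - ‖w‖^2) ≤ Real.sqrt 1 :=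
      Real.sqrt_le_sqrt (by nlinarith [norm_nonneg w])
    _ = 1 := Real.sqrt_one
  have hcge : 1 - ‖w‖^2 ≤ c := by
    rw [hc]
    nlinarith [Real.sq_sqrt h0, Real.sqrt_nonneg (1 - ‖w‖^2)]
  have hperp : inner (𝕜 := ℝ) (w : EuclideanSpace ℝ (Fin (m+1))) ((c - 1) • y₁) = 0 := by
    rw [real_inner_smul_right, real_inner_comm, inner_perp]; ring
  have heq : sphGraph y₁ w - y₁ = (w : EuclideanSpace ℝ (Fin (m+1))) + (c - 1) • y₁ := by
    rw [sphGraph, sub_smul, one_smul]; abel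
  have hsq : ‖sphGraph y₁ w - y₁‖^2 ≤ ρ^2 := by
    rw [heq, norm_add_sq_real, hperp, norm_smul, Real.norm_eq_abs, hy]
    have h1c : |c - 1| = 1 - c := by rw [abs_sub_comm]; exact abs_of_nonneg (by linarith)
    have : ‖(w : EuclideanSpace ℝ (Fin (m+1)))‖ = ‖w‖ := rfl
    rw [this, h1c]
    have h2 : 1 - c ≤ ‖w‖^2 := by linarith
    have h3 : 0 ≤ 1 - c := by linarith
    nlinarith [norm_nonneg (w : EuclideanSpace ℝ (Fin (m+1))), sq_nonneg (1 - c)]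
  calc ‖sphGraph y₁ w - y₁‖ = Real.sqrt (‖sphGraph y₁ w - y₁‖^2) :=
        (Real.sqrt_sq (norm_nonneg _)).symm
    _ ≤ Real.sqrt (ρ^2) := Real.sqrt_le_sqrt hsq
    _ = ρ := Real.sqrt_sq hρ.le

lemma sphGraph_proj (w : (Submodule.span ℝ {y₁})ᗮ) :
    Submodule.orthogonalProjectionOnto (Submodule.span ℝ {y₁})ᗮ (sphGraph y₁ w) = w := by
  rw [sphGraph, map_add, Submodule.orthogonalProjectionOnto_mem_subspace_eq_self, _root_.map_smul,
    Submodule.orthogonalProjectionOnto_apply_of_mem_orthogonal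
      (Submodule.le_orthogonal_orthogonal _ (Submodule.mem_span_singleton_self y₁)),
    smul_zero, add_zero]

end Sphere

lemma cap_lower (m : ℕ) (y₁ : EuclideanSpace ℝ (Fin (m+1))) (hy : ‖y₁‖ = 1)
    (ρ : ℝ) (h0 : 0 < ρ) (h1 : ρ ≤ 1) :
    ENNReal.ofReal ((ρ / Real.sqrt (m+1)) ^ m) ≤
      μH[(m:ℕ)] (Metric.sphere (0 : EuclideanSpace ℝ (Fin (m+1))) 1 ∩ Metric.closedBall y₁ ρ) := by
  haveI : Fact (Module.finrank ℝ (EuclideanSpace ℝ (Fin (m+1))) = m+1) :=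
    ⟨finrank_euclideanSpace_fin⟩
  have hy0 : y₁ ≠ 0 := by intro h; rw [h] at hy; simp at hy
  set V := (Submodule.span ℝ {y₁})ᗮ with hV
  set L := (OrthonormalBasis.fromOrthogonalSpanSingleton (𝕜 := ℝ) m hy0).repr with hL
  -- the 1-Lipschitz projection map
  set P : EuclideanSpace ℝ (Fin (m+1)) → EuclideanSpace ℝ (Fin (m+1)) :=
    fun x => (Submodule.orthogonalProjectionOnto V x : EuclideanSpace ℝ (Fin (m+1))) with hP
  have hPlip : LipschitzWith 1 P := by
    have h2 := (Submodule.orthogonalProjectionOnto V).lipschitz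
    have h3 : LipschitzWith 1 (⇑(Submodule.orthogonalProjectionOnto V)) := by
      refine h2.weaken ?_
      exact_mod_cast Submodule.orthogonalProjectionOnto_norm_le V
    have h4 := (isometry_subtype_coe (s := (V : Set (EuclideanSpace ℝ (Fin (m+1)))))).lipschitz.comp h3
    rw [mul_one] at h4
    exact h4
  -- inclusion
  have hsub : (Subtype.val '' (Metric.closedBall (0 : V) (ρ/2))) ⊆
      P '' (Metric.sphere (0 : EuclideanSpace ℝ (Fin (m+1))) 1 ∩ Metric.closedBall y₁ ρ) := by
    rintro x ⟨w, hw, rfl⟩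
    rw [Metric.mem_closedBall, dist_zero_right] at hw
    refine ⟨sphGraph y₁ w, ⟨?_, ?_⟩, ?_⟩
    · rw [Metric.mem_sphere, dist_zero_right]
      exact sphGraph_norm y₁ hy (by linarith)
    · rw [Metric.mem_closedBall, dist_eq_norm]
      exact sphGraph_dist y₁ hy h0 h1 hw
    · show (↑(Submodule.orthogonalProjectionOnto V (sphGraph y₁ w)) : EuclideanSpace ℝ (Fin (m+1))) = ↑w
      rw [sphGraph_proj]
  -- chain of inequalities
  have step1 : μH[(m:ℕ)] (Subtype.val '' (Metric.closedBall (0 : V) (ρ/2))) ≤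
      μH[(m:ℕ)] (Metric.sphere (0 : EuclideanSpace ℝ (Fin (m+1))) 1 ∩ Metric.closedBall y₁ ρ) := by
    calc μH[(m:ℕ)] (Subtype.val '' (Metric.closedBall (0 : V) (ρ/2)))
        ≤ μH[(m:ℕ)] (P '' (Metric.sphere (0 : EuclideanSpace ℝ (Fin (m+1))) 1 ∩ Metric.closedBall y₁ ρ)) :=
          measure_mono hsub
      _ ≤ μH[(m:ℕ)] (Metric.sphere (0 : EuclideanSpace ℝ (Fin (m+1))) 1 ∩ Metric.closedBall y₁ ρ) := by
          simpa using hPlip.hausdorffMeasure_image_le (by positivity) _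
  have step2 : μH[(m:ℕ)] (Subtype.val '' (Metric.closedBall (0 : V) (ρ/2))) =
      μH[(m:ℕ)] (Metric.closedBall (0 : V) (ρ/2)) :=
    isometry_subtype_coe.hausdorffMeasure_image (Or.inl (by positivity)) _
  have step3 : μH[(m:ℕ)] (Metric.closedBall (0 : V) (ρ/2)) =
      μH[(m:ℕ)] (Metric.closedBall (0 : EuclideanSpace ℝ (Fin m)) (ρ/2)) := by
    have := L.isometry.hausdorffMeasure_image (Or.inl (by positivity : (0:ℝ) ≤ (m:ℕ)))
      (Metric.closedBall (0 : V) (ρ/2))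
    rw [← this]
    congr 1
    have : L '' (Metric.closedBall (0 : V) (ρ/2)) =
        L.toIsometryEquiv '' (Metric.closedBall (0 : V) (ρ/2)) := rfl
    rw [this, IsometryEquiv.image_closedBall]
    simp
  have step4 : ENNReal.ofReal ((ρ / Real.sqrt (m+1)) ^ m) ≤
      μH[(m:ℕ)] (Metric.closedBall (0 : EuclideanSpace ℝ (Fin m)) (ρ/2)) := by
    refine le_trans ?_ (hm_ball_lower m (ρ/2) (by positivity))
    apply ENNReal.ofReal_le_ofReal
    rcases Nat.eq_zero_or_pos m with h | h
    · subst h; simp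
    · have hm0 : (0:ℝ) < Real.sqrt m := Real.sqrt_pos.2 (by exact_mod_cast h)
      have : (2 * (ρ/2 / Real.sqrt m)) = ρ / Real.sqrt m := by ring
      rw [this]
      apply pow_le_pow_left₀ (by positivity)
      apply div_le_div_of_nonneg_left h0.le hm0
      exact Real.sqrt_le_sqrt (by push_cast; linarith)
  calc ENNReal.ofReal ((ρ / Real.sqrt (m+1)) ^ m)
      ≤ μH[(m:ℕ)] (Metric.closedBall (0 : EuclideanSpace ℝ (Fin m)) (ρ/2)) := step4
    _ = μH[(m:ℕ)] (Metric.closedBall (0 : V) (ρ/2)) := step3.symm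
    _ = μH[(m:ℕ)] (Subtype.val '' (Metric.closedBall (0 : V) (ρ/2))) := step2.symm
    _ ≤ _ := step1

lemma sphGraph_lipschitzOn (y₁ : EuclideanSpace ℝ (Fin (m+1))) (hy : ‖y₁‖ = 1) :
    LipschitzOnWith 2 (sphGraph y₁) (Metric.closedBall (0 : (Submodule.span ℝ {y₁})ᗮ) (1/2)) := by
  apply LipschitzOnWith.of_dist_le_mul
  intro w hw v hv
  rw [Metric.mem_closedBall, dist_zero_right] at hw hv
  have hb : ∀ u : (Submodule.span ℝ {y₁})ᗮ, ‖u‖ ≤ 1/2 → (3/4 : ℝ) ≤ 1 - ‖u‖^2 := by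
    intro u hu; nlinarith [norm_nonneg u]
  have hsw := hb w hw
  have hsv := hb v hv
  have hsum : 1 ≤ Real.sqrt (1 - ‖w‖^2) + Real.sqrt (1 - ‖v‖^2) := by
    have h1 : Real.sqrt (3/4) ≤ Real.sqrt (1 - ‖w‖^2) := Real.sqrt_le_sqrt hsw
    have h2 : Real.sqrt (3/4) ≤ Real.sqrt (1 - ‖v‖^2) := Real.sqrt_le_sqrt hsv
    have h3 : (1/2 : ℝ) ≤ Real.sqrt (3/4) := by
      rw [show (1/2 : ℝ) = Real.sqrt (1/4) by rw [show (1/4:ℝ) = (1/2)^2 by norm_num, Real.sqrt_sq]; norm_num]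
      exact Real.sqrt_le_sqrt (by norm_num)
    linarith
  have key : dist (sphGraph y₁ w) (sphGraph y₁ v) ≤
      dist w v + |Real.sqrt (1 - ‖w‖^2) - Real.sqrt (1 - ‖v‖^2)| := by
    rw [dist_eq_norm, sphGraph, sphGraph]
    have : ((w : EuclideanSpace ℝ (Fin (m+1))) + Real.sqrt (1 - ‖w‖^2) • y₁) -
        ((v : EuclideanSpace ℝ (Fin (m+1))) + Real.sqrt (1 - ‖v‖^2) • y₁) =
        ((w : EuclideanSpace ℝ (Fin (m+1))) - v) +
          (Real.sqrt (1 - ‖w‖^2) - Real.sqrt (1 - ‖v‖^2)) • y₁ := by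
      rw [sub_smul]; abel
    rw [this]
    calc ‖_ + _‖ ≤ ‖(w : EuclideanSpace ℝ (Fin (m+1))) - v‖ +
          ‖(Real.sqrt (1 - ‖w‖^2) - Real.sqrt (1 - ‖v‖^2)) • y₁‖ := norm_add_le _ _
      _ = dist w v + |Real.sqrt (1 - ‖w‖^2) - Real.sqrt (1 - ‖v‖^2)| := by
          rw [norm_smul, Real.norm_eq_abs, hy, mul_one, dist_eq_norm]
          rfl
  have key2 : |Real.sqrt (1 - ‖w‖^2) - Real.sqrt (1 - ‖v‖^2)| ≤ dist w v := by
    calc |Real.sqrt (1 - ‖w‖^2) - Real.sqrt (1 - ‖v‖^2)| ≤ |(1 - ‖w‖^2) - (1 - ‖v‖^2)| :=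
          sqrt_diff_le (by linarith) (by linarith) hsum
      _ = |‖v‖^2 - ‖w‖^2| := by ring_nf
      _ = (‖v‖ + ‖w‖) * |‖v‖ - ‖w‖| := by
          rw [← abs_of_nonneg (by positivity : (0:ℝ) ≤ ‖v‖ + ‖w‖), ← abs_mul]
          congr 1; ring
      _ ≤ 1 * dist w v := by
          apply mul_le_mul (by linarith) _ (abs_nonneg _) zero_le_one
          rw [dist_comm, dist_eq_norm]
          exact abs_norm_sub_norm_le _ _
      _ = dist w v := one_mul _
  calc dist (sphGraph y₁ w) (sphGraph y₁ v) ≤ dist w v + |Real.sqrt (1 - ‖w‖^2) - Real.sqrt (1 - ‖v‖^2)| := key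
    _ ≤ dist w v + dist w v := by linarith
    _ = (2:NNReal) * dist w v := by push_cast; ring

lemma cap_cover (y₁ : EuclideanSpace ℝ (Fin (m+1))) (hy : ‖y₁‖ = 1) :
    Metric.sphere (0 : EuclideanSpace ℝ (Fin (m+1))) 1 ∩ Metric.closedBall y₁ (1/2) ⊆
      sphGraph y₁ '' (Metric.closedBall (0 : (Submodule.span ℝ {y₁})ᗮ) (1/2)) := by
  rintro y ⟨hy1, hy2⟩
  rw [Metric.mem_sphere, dist_zero_right] at hy1
  rw [Metric.mem_closedBall, dist_eq_norm] at hy2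
  set c : ℝ := inner (𝕜 := ℝ) y₁ y with hc
  have hnc : ‖y - y₁‖^2 = 2 - 2*c := by
    rw [norm_sub_sq_real, hy1, hy]
    rw [real_inner_comm]
    ring
  have hc78 : (7/8 : ℝ) ≤ c := by nlinarith [norm_nonneg (y - y₁)]
  set w : EuclideanSpace ℝ (Fin (m+1)) := y - c • y₁ with hw
  have hwmem : w ∈ (Submodule.span ℝ {y₁})ᗮ := by
    rw [Submodule.mem_orthogonal]
    intro u hu
    rw [Submodule.mem_span_singleton] at hu
    obtain ⟨a, rfl⟩ := hu
    rw [real_inner_smul_left, hw, inner_sub_right, real_inner_smul_right]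
    rw [← hc, real_inner_self_eq_norm_sq, hy]
    ring_nf
  have hwn : ‖w‖^2 = 1 - c^2 := by
    rw [hw, norm_sub_sq_real, hy1, norm_smul, Real.norm_eq_abs, hy, real_inner_smul_right]
    have hcomm : inner (𝕜 := ℝ) y y₁ = c := by rw [hc]; exact real_inner_comm y₁ y
    rw [hcomm, mul_one, sq_abs]
    ring
  have hwhalf : ‖w‖ ≤ 1/2 := by
    have h2 : ‖w‖^2 ≤ 1/4 := by nlinarith
    nlinarith [norm_nonneg w]
  refine ⟨⟨w, hwmem⟩, ?_, ?_⟩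
  · rw [Metric.mem_closedBall, dist_zero_right]
    exact hwhalf
  · show (w : EuclideanSpace ℝ (Fin (m+1))) + Real.sqrt (1 - ‖(⟨w, hwmem⟩ : (Submodule.span ℝ {y₁})ᗮ)‖^2) • y₁ = y
    have hnormeq : ‖(⟨w, hwmem⟩ : (Submodule.span ℝ {y₁})ᗮ)‖ = ‖w‖ := rfl
    rw [hnormeq]
    have : 1 - ‖w‖^2 = c^2 := by linarith
    rw [this, Real.sqrt_sq (by linarith : (0:ℝ) ≤ c), hw]
    abel


lemma cap_finite (y₁ : EuclideanSpace ℝ (Fin (m+1))) (hy : ‖y₁‖ = 1) :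
    μH[(m:ℕ)] (Metric.sphere (0 : EuclideanSpace ℝ (Fin (m+1))) 1 ∩ Metric.closedBall y₁ (1/2)) < ⊤ := by
  haveI : Fact (Module.finrank ℝ (EuclideanSpace ℝ (Fin (m+1))) = m+1) :=
    ⟨finrank_euclideanSpace_fin⟩
  have hy0 : y₁ ≠ 0 := by intro h; rw [h] at hy; simp at hy
  set V := (Submodule.span ℝ {y₁})ᗮ with hV
  set L := (OrthonormalBasis.fromOrthogonalSpanSingleton (𝕜 := ℝ) m hy0).repr with hL
  have step3 : μH[(m:ℕ)] (Metric.closedBall (0 : V) (1/2)) =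
      μH[(m:ℕ)] (Metric.closedBall (0 : EuclideanSpace ℝ (Fin m)) (1/2)) := by
    have := L.isometry.hausdorffMeasure_image (Or.inl (by positivity : (0:ℝ) ≤ (m:ℕ)))
      (Metric.closedBall (0 : V) (1/2))
    rw [← this]
    congr 1
    have h4 : L '' (Metric.closedBall (0 : V) (1/2)) =
        L.toIsometryEquiv '' (Metric.closedBall (0 : V) (1/2)) := rfl
    rw [h4, IsometryEquiv.image_closedBall]
    simp
  calc μH[(m:ℕ)] (Metric.sphere (0 : EuclideanSpace ℝ (Fin (m+1))) 1 ∩ Metric.closedBall y₁ (1/2))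
      ≤ μH[(m:ℕ)] (sphGraph y₁ '' (Metric.closedBall (0 : V) (1/2))) :=
        measure_mono (cap_cover y₁ hy)
    _ ≤ (2:NNReal) ^ (m:ℝ) * μH[(m:ℕ)] (Metric.closedBall (0 : V) (1/2)) :=
        (sphGraph_lipschitzOn y₁ hy).hausdorffMeasure_image_le (by positivity)
    _ < ⊤ := by
        rw [step3]
        exact ENNReal.mul_lt_top (ENNReal.rpow_lt_top_of_nonneg (by positivity) ENNReal.coe_ne_top) (hm_ball_finite m (1/2) (by norm_num))

lemma sphere_finite (m : ℕ) :
    μH[(m:ℕ)] (Metric.sphere (0 : EuclideanSpace ℝ (Fin (m+1))) 1) < ⊤ := by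
  obtain ⟨t, hts, htf, htcov⟩ :=
    (isCompact_sphere (0 : EuclideanSpace ℝ (Fin (m+1))) 1).finite_cover_balls
    (e := 1/2) (by norm_num)
  calc μH[(m:ℕ)] (Metric.sphere (0 : EuclideanSpace ℝ (Fin (m+1))) 1)
      ≤ μH[(m:ℕ)] (⋃ y ∈ htf.toFinset, Metric.sphere (0 : EuclideanSpace ℝ (Fin (m+1))) 1 ∩
          Metric.closedBall y (1/2)) := by
        apply measure_mono
        intro x hx
        obtain ⟨y, hyT, hxy⟩ := by simpa using htcov hx
        exact mem_biUnion (htf.mem_toFinset.2 hyT) ⟨hx, by rw [Metric.mem_closedBall]; linarith [hxy]⟩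
    _ ≤ ∑ y ∈ htf.toFinset, μH[(m:ℕ)] (Metric.sphere (0 : EuclideanSpace ℝ (Fin (m+1))) 1 ∩
          Metric.closedBall y (1/2)) := measure_biUnion_finset_le _ _
    _ < ⊤ := ENNReal.sum_lt_top.2 (fun y hy => cap_finite y (by
          have := hts (htf.mem_toFinset.1 hy)
          simpa [dist_eq_norm] using this))

/-- two-segment decomposition via IVT -/
lemma exists_decomp {E : Type*} [NormedAddCommGroup E] [NormedSpace ℝ E]
    {t : ℝ} (ht : 0 < t) {v y₀ : E} (hy₀ : ‖y₀‖ = 1) (hv : ‖v‖ ≤ t) :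
    ∃ s : ℝ, 0 ≤ s ∧ s < 1 ∧ ∃ y : E, ‖y‖ = 1 ∧ v = (t*s) • y₀ + (t*(1-s)) • y := by
  by_cases hcase : v = t • y₀
  · exact ⟨0, le_refl _, zero_lt_one, y₀, hy₀, by simp [hcase]⟩
  · set h : ℝ → ℝ := fun s => ‖v - (t*s) • y₀‖ - t*(1-s) with hh
    have hcont : Continuous h := by
      apply Continuous.sub
      · exact (continuous_const.sub ((continuous_const.mul continuous_id).smul
          continuous_const)).norm
      · exact continuous_const.mul (continuous_const.sub continuous_id)
    have h0 : h 0 ≤ 0 := by simp [hh]; linarith [hv]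
    have h1 : 0 < h 1 := by
      simp only [hh, mul_one, sub_self, mul_zero, sub_zero]
      rw [norm_pos_iff, sub_ne_zero]
      exact fun hc => hcase hc
    have : (0:ℝ) ∈ Icc (h 0) (h 1) := ⟨h0, h1.le⟩
    obtain ⟨s, hs01, hs⟩ := intermediate_value_Icc zero_le_one hcont.continuousOn this
    have hs1 : s < 1 := by
      rcases lt_or_eq_of_le hs01.2 with h' | h'
      · exact h'
      · exfalso; rw [h'] at hs; rw [hs] at h1; exact lt_irrefl _ h1
    have hr : ‖v - (t*s) • y₀‖ = t*(1-s) := by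
      have := hs; simp only [hh] at this; linarith
    have hrpos : 0 < t*(1-s) := by
      apply mul_pos ht; linarith
    refine ⟨s, hs01.1, hs1, (t*(1-s))⁻¹ • (v - (t*s) • y₀), ?_, ?_⟩
    · rw [norm_smul, Real.norm_eq_abs, abs_of_pos (inv_pos.2 hrpos), hr]
      exact inv_mul_cancel₀ hrpos.ne'
    · rw [smul_inv_smul₀ hrpos.ne']
      abel
lemma int_count {c a : ℝ} (ha : 1/2 < a) :
    a ≤ ((Finset.Icc ⌈c - a⌉ ⌊c + a⌋).card : ℝ) ∧
      ∀ z ∈ Finset.Icc ⌈c - a⌉ ⌊c + a⌋, |(z:ℝ) - c| ≤ a := by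
  have hne : ⌈c - a⌉ ≤ ⌊c + a⌋ := by
    have h1 : (⌈c - a⌉ : ℝ) < c + a := by
      calc (⌈c - a⌉ : ℝ) < c - a + 1 := Int.ceil_lt_add_one _
        _ ≤ c + a := by linarith
    exact Int.le_floor.2 h1.le
  constructor
  · rw [Int.card_Icc]
    have h2 : c + a - 1 ≤ (⌊c + a⌋ : ℝ) + 0 := by linarith [Int.sub_one_lt_floor (c+a)]
    have h3 : (⌈c - a⌉ : ℝ) < c - a + 1 := Int.ceil_lt_add_one _
    have h4 : (((⌊c + a⌋ + 1 - ⌈c - a⌉).toNat : ℤ) : ℝ) = ((⌊c + a⌋ : ℝ) + 1 - ⌈c - a⌉) := by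
      rw [Int.toNat_of_nonneg (by omega)]
      push_cast; ring
    rcases le_or_gt a 1 with h5 | h5
    · calc a ≤ 1 := h5
        _ ≤ ((⌊c + a⌋ + 1 - ⌈c - a⌉).toNat : ℝ) := by
          have : (1:ℤ) ≤ (⌊c + a⌋ + 1 - ⌈c - a⌉).toNat := by omega
          exact_mod_cast this
    · calc a ≤ 2*a - 1 := by linarith
        _ ≤ ((⌊c + a⌋ + 1 - ⌈c - a⌉).toNat : ℝ) := by
          have := h4
          push_cast at this ⊢
          linarith
  · intro z hz
    rw [Finset.mem_Icc] at hz
    have h1 : c - a ≤ (z : ℝ) := le_trans (Int.le_ceil _) (by exact_mod_cast hz.1)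
    have h2 : (z : ℝ) ≤ c + a := le_trans (by exact_mod_cast hz.2) (Int.floor_le _)
    rw [abs_le]; constructor <;> linarith

lemma coord_le_norm {d : ℕ} (x : EuclideanSpace ℝ (Fin d)) (i : Fin d) : |x i| ≤ ‖x‖ := by
  rw [EuclideanSpace.norm_eq]
  rw [← Real.sqrt_sq_eq_abs]
  apply Real.sqrt_le_sqrt
  calc x i ^ 2 = ‖x i‖ ^ 2 := by rw [Real.norm_eq_abs, sq_abs]
    _ ≤ ∑ j, ‖x j‖ ^ 2 :=
        Finset.single_le_sum (f := fun j => ‖x j‖ ^ 2) (fun j _ => by positivity)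
          (Finset.mem_univ i)

lemma lattice_count (d : ℕ) (hd : 1 ≤ d) (c : EuclideanSpace ℝ (Fin d)) {t : ℝ}
    (ht : Real.sqrt d / 2 < t) :
    ∃ K : Finset (Fin d → ℤ), (t / Real.sqrt d)^d ≤ (K.card : ℝ) ∧
      ∀ k ∈ K, ‖(show EuclideanSpace ℝ (Fin d) from WithLp.toLp 2 (fun i => (k i : ℝ))) - c‖ ≤ t := by
  have hsd : (1:ℝ) ≤ Real.sqrt d := by
    rw [show (1:ℝ) = Real.sqrt 1 by simp]
    exact Real.sqrt_le_sqrt (by exact_mod_cast hd)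
  have hsd0 : (0:ℝ) < Real.sqrt d := by linarith
  set a := t / Real.sqrt d with ha
  have ha2 : 1/2 < a := by
    rw [ha, lt_div_iff₀ hsd0]
    calc 1/2 * Real.sqrt d = Real.sqrt d / 2 := by ring
      _ < t := ht
  have ha0 : 0 < a := by linarith
  refine ⟨Fintype.piFinset (fun i => Finset.Icc ⌈c i - a⌉ ⌊c i + a⌋), ?_, ?_⟩
  · rw [Fintype.card_piFinset]
    push_cast
    calc (t / Real.sqrt d)^d = ∏ _i : Fin d, a := by rw [Finset.prod_const]; simp [ha]
      _ ≤ ∏ i : Fin d, ((Finset.Icc ⌈c i - a⌉ ⌊c i + a⌋).card : ℝ) :=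
          Finset.prod_le_prod (fun _ _ => ha0.le) (fun i _ => (int_count ha2).1)
  · intro k hk
    rw [Fintype.mem_piFinset] at hk
    have hcoord : ∀ i, |(k i : ℝ) - c i| ≤ a := fun i => (int_count ha2).2 _ (hk i)
    rw [EuclideanSpace.norm_eq]
    have hsum : ∑ i, ‖(k i : ℝ) - c i‖^2 ≤ d * a^2 := by
      calc ∑ i, ‖(k i : ℝ) - c i‖^2 ≤ ∑ _i : Fin d, a^2 := by
            apply Finset.sum_le_sum
            intro i _
            rw [Real.norm_eq_abs]
            exact pow_le_pow_left₀ (abs_nonneg _) (hcoord i) 2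
        _ = d * a^2 := by rw [Finset.sum_const]; simp [mul_comm]
    calc Real.sqrt (∑ i, ‖((show EuclideanSpace ℝ (Fin d) from WithLp.toLp 2 (fun i => (k i:ℝ))) - c) i‖^2)
          ≤ Real.sqrt (d * a^2) := by
          apply Real.sqrt_le_sqrt
          exact le_trans (le_of_eq (by rfl)) hsum
      _ = Real.sqrt d * a := by
          rw [Real.sqrt_mul (by positivity), Real.sqrt_sq ha0.le]
      _ = t := by rw [ha]; field_simp


set_option maxHeartbeats 2000000

/-- Anticoncentration step of Lemma 5.2: let `S` be uniform on `[0,1]` and `Y` uniform on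
the sphere `𝕊^{d-1}`, independent; for `t > √d/2`, any starting point `x₀'` and direction
`y₀ ∈ 𝕊^{d-1}`, there is `c₂ > 0` depending only on `d` such that for every `u` and every
`δ ∈ (0,1)`, the point `x₀' + tS y₀ + t(1-S) Y` lies within torus distance `δ` of `u`
(i.e. within `δ` of some integer translate of `u`) with probability at least `c₂ δ^d`. -/
theorem stmt18 (d : ℕ) (hd : 1 ≤ d) :
    ∃ c₂ > (0:ℝ),
      ∀ (Ω : Type) (_ : MeasureSpace Ω) (_ : IsProbabilityMeasure (ℙ : Measure Ω))
        (S : Ω → ℝ) (Y : Ω → EuclideanSpace ℝ (Fin d)),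
        Measure.map S ℙ = volume.restrict (Set.Icc (0:ℝ) 1) →
        Measure.map Y ℙ =
          (μH[(d - 1 : ℕ)] (Metric.sphere (0 : EuclideanSpace ℝ (Fin d)) 1))⁻¹ •
            (μH[(d - 1 : ℕ)]).restrict (Metric.sphere (0 : EuclideanSpace ℝ (Fin d)) 1) →
        IndepFun S Y →
        ∀ t : ℝ, Real.sqrt d / 2 < t →
        ∀ x₀' u y₀ : EuclideanSpace ℝ (Fin d), ‖y₀‖ = 1 →
        ∀ δ : ℝ, 0 < δ → δ < 1 →
          ENNReal.ofReal (c₂ * δ ^ d) ≤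
            ℙ {ω | ∃ k : Fin d → ℤ,
              ‖x₀' + (t * S ω) • y₀ + (t * (1 - S ω)) • Y ω - u -
                  (show EuclideanSpace ℝ (Fin d) from WithLp.toLp 2 (fun i => (k i : ℝ)))‖ ≤ δ} := by
  obtain ⟨m, rfl⟩ : ∃ m, d = m + 1 := ⟨d - 1, (Nat.succ_pred_eq_of_pos hd).symm⟩
  set D : ℝ := Real.sqrt ((m+1 : ℕ) : ℝ) with hD
  have hD1 : (1:ℝ) ≤ D := by
    rw [hD, show (1:ℝ) = Real.sqrt 1 by simp]
    apply Real.sqrt_le_sqrt; push_cast; linarith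
  have hD0 : (0:ℝ) < D := by linarith
  set MS := μH[(m:ℕ)] (Metric.sphere (0 : EuclideanSpace ℝ (Fin (m+1))) 1) with hMS
  have hMSfin : MS ≠ ⊤ := (sphere_finite m).ne
  have hDD : Real.sqrt ((m:ℝ)+1) = D := by rw [hD]; norm_cast
  have hMSpos : 0 < MS := by
    have h1 : ‖(EuclideanSpace.single (0 : Fin (m+1)) (1:ℝ))‖ = 1 := by
      simp [EuclideanSpace.norm_single]
    calc (0:ENNReal) < ENNReal.ofReal ((1 / D)^m) := by
          apply ENNReal.ofReal_pos.2; positivity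
      _ ≤ μH[(m:ℕ)] (Metric.sphere (0 : EuclideanSpace ℝ (Fin (m+1))) 1 ∩
            Metric.closedBall (EuclideanSpace.single (0 : Fin (m+1)) (1:ℝ)) 1) := by
          rw [← hDD]
          exact cap_lower m _ h1 1 one_pos le_rfl
      _ ≤ MS := measure_mono inter_subset_left
  have hMStR : 0 < MS.toReal := ENNReal.toReal_pos hMSpos.ne' hMSfin
  set β : ℝ := (1/D)^(m+1) * (1/8) * (1/(4*D))^m with hβ
  have hβ0 : 0 < β := by positivity
  refine ⟨β / MS.toReal, div_pos hβ0 hMStR, ?_⟩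
  intro Ω mΩ hprob S Y hS hY hindep t ht x₀' u y₀ hy₀ δ hδ0 hδ1
  simp only [Nat.add_sub_cancel] at hY
  have hthalf : 1/2 < t := lt_of_le_of_lt (by linarith : (1:ℝ)/2 ≤ D/2) ht
  have ht0 : 0 < t := by linarith
  -- a.e.-measurability of S and Y
  have hSae : AEMeasurable S ℙ := by
    by_contra h
    rw [Measure.map_of_not_aemeasurable h] at hS
    have h1 : (volume.restrict (Set.Icc (0:ℝ) 1)) (Set.Icc (0:ℝ) 1) = ENNReal.ofReal 1 := by
      rw [Measure.restrict_apply measurableSet_Icc, inter_self, Real.volume_Icc]; norm_num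
    rw [← hS] at h1
    simp at h1
  have hYae : AEMeasurable Y ℙ := by
    by_contra h
    rw [Measure.map_of_not_aemeasurable h] at hY
    have h1 := congrArg (fun μ : Measure (EuclideanSpace ℝ (Fin (m+1))) => μ univ) hY.symm
    simp only [Measure.smul_apply, Measure.restrict_apply_univ, smul_eq_mul,
      Measure.coe_zero, Pi.zero_apply] at h1
    rw [← hMS, ENNReal.inv_mul_cancel hMSpos.ne' hMSfin] at h1
    exact one_ne_zero h1
  set S' := hSae.mk S with hS'def
  set Y' := hYae.mk Y with hY'def
  have hS'm : Measurable S' := hSae.measurable_mk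
  have hY'm : Measurable Y' := hYae.measurable_mk
  have hSeq : S =ᵐ[ℙ] S' := hSae.ae_eq_mk
  have hYeq : Y =ᵐ[ℙ] Y' := hYae.ae_eq_mk
  have hmapS' : Measure.map S' ℙ = volume.restrict (Set.Icc (0:ℝ) 1) := by
    rw [← Measure.map_congr hSeq]; exact hS
  have hmapY' : Measure.map Y' ℙ = MS⁻¹ •
      (μH[(m:ℕ)]).restrict (Metric.sphere (0 : EuclideanSpace ℝ (Fin (m+1))) 1) := by
    rw [← Measure.map_congr hYeq]; exact hY
  have hindep' : IndepFun S' Y' ℙ := hindep.congr hSeq hYeq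
  -- the conull measurable set where S = S' and Y = Y'
  have hae : ℙ {ω | ¬(S ω = S' ω ∧ Y ω = Y' ω)} = 0 := by
    have h2 : ∀ᵐ ω ∂(ℙ : Measure Ω), S ω = S' ω ∧ Y ω = Y' ω := hSeq.and hYeq
    exact h2
  obtain ⟨N, hNsup, hNmeas, hN0⟩ := exists_measurable_superset_of_null hae
  have hGmeas : MeasurableSet Nᶜ := hNmeas.compl
  have hGc : ℙ Nᶜᶜ = 0 := by rwa [compl_compl]
  have hGprop : ∀ ω ∈ Nᶜ, S ω = S' ω ∧ Y ω = Y' ω := by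
    intro ω hω
    by_contra h
    exact hω (hNsup h)
  -- lattice points
  obtain ⟨K, hKcard, hKnorm⟩ := lattice_count (m+1) (Nat.le_add_left 1 m) (x₀' - u) ht
  have hdec : ∀ k ∈ K, ∃ s, 0 ≤ s ∧ s < 1 ∧ ∃ y : EuclideanSpace ℝ (Fin (m+1)), ‖y‖ = 1 ∧
      (show EuclideanSpace ℝ (Fin (m+1)) from WithLp.toLp 2 (fun i => (k i:ℝ))) - (x₀' - u) =
        (t*s) • y₀ + (t*(1-s)) • y :=
    fun k hk => exists_decomp ht0 hy₀ (hKnorm k hk)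
  choose! sk hsk0 hsk1 yk hyk hvk using hdec
  set η : ℝ := δ/(8*t) with hη
  set ρ : ℝ := δ/(4*t) with hρ
  have hη0 : 0 < η := by positivity
  have hη2 : η ≤ 1/2 := by
    rw [hη, div_le_div_iff₀ (by linarith) (by norm_num)]
    nlinarith
  have hρ0 : 0 < ρ := by positivity
  have hρ1 : ρ ≤ 1 := by
    rw [hρ, div_le_one (by linarith)]
    nlinarith
  set J : (Fin (m+1) → ℤ) → Set ℝ := fun k =>
    if sk k ≤ 1/2 then Set.Icc (sk k) (sk k + η) else Set.Icc (sk k - η) (sk k) with hJ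
  have hJmeas : ∀ k, MeasurableSet (J k) := by
    intro k; rw [hJ]; dsimp only; split_ifs <;> exact measurableSet_Icc
  have hJsub : ∀ k ∈ K, J k ⊆ Set.Icc 0 1 := by
    intro k hk x hx
    rw [hJ] at hx; dsimp only at hx
    split_ifs at hx with h <;> rw [Set.mem_Icc] at hx ⊢ <;>
      constructor <;> [skip; skip; skip; skip] <;>
      first
        | linarith [hsk0 k hk, hsk1 k hk, hx.1, hx.2]
  have hJnear : ∀ k, ∀ x ∈ J k, |x - sk k| ≤ η := by
    intro k x hx
    rw [hJ] at hx; dsimp only at hx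
    split_ifs at hx with h <;> rw [Set.mem_Icc] at hx <;> rw [abs_le] <;>
      constructor <;> linarith [hx.1, hx.2]
  have hJvol : ∀ k ∈ K, (volume.restrict (Set.Icc (0:ℝ) 1)) (J k) = ENNReal.ofReal η := by
    intro k hk
    rw [Measure.restrict_apply (hJmeas k), Set.inter_eq_self_of_subset_left (hJsub k hk)]
    rw [hJ]; dsimp only
    split_ifs <;> rw [Real.volume_Icc] <;> ring_nf
  set Ev : (Fin (m+1) → ℤ) → Set Ω := fun k =>
    S' ⁻¹' (J k) ∩ Y' ⁻¹' (Metric.closedBall (yk k) ρ) with hEv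
  have hEmeas : ∀ k, MeasurableSet (Ev k ∩ Nᶜ) := fun k =>
    (((hJmeas k).preimage hS'm).inter (measurableSet_closedBall.preimage hY'm)).inter hGmeas
  -- key pointwise estimate
  have hkey : ∀ k ∈ K, ∀ ω ∈ Ev k ∩ Nᶜ,
      ‖x₀' + (t * S ω) • y₀ + (t*(1 - S ω)) • Y ω - u -
        (show EuclideanSpace ℝ (Fin (m+1)) from WithLp.toLp 2 (fun i => (k i:ℝ)))‖ ≤ δ/2 := by
    intro k hk ω hω
    obtain ⟨⟨hSω, hYω⟩, hGω⟩ := hω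
    obtain ⟨heqS, heqY⟩ := hGprop ω hGω
    rw [heqS, heqY]
    set s := S' ω
    set y := Y' ω
    have hs01 : s ∈ Set.Icc (0:ℝ) 1 := hJsub k hk hSω
    rw [Set.mem_Icc] at hs01
    have hnear : |s - sk k| ≤ η := hJnear k s hSω
    have hyd : ‖y - yk k‖ ≤ ρ := by
      rw [← dist_eq_norm]; exact hYω
    have hrw : x₀' + (t * s) • y₀ + (t*(1 - s)) • y - u -
        (show EuclideanSpace ℝ (Fin (m+1)) from WithLp.toLp 2 (fun i => (k i:ℝ))) =
        (t*(s - sk k)) • y₀ + (t*(1 - s)) • (y - yk k) + (t*(sk k - s)) • yk k := by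
      have h5 := hvk k hk
      have h6 : (show EuclideanSpace ℝ (Fin (m+1)) from WithLp.toLp 2 (fun i => (k i:ℝ))) =
          (t*(sk k)) • y₀ + (t*(1-(sk k))) • (yk k) + (x₀' - u) := by
        rw [← h5]; abel
      rw [h6]
      module
    rw [hrw]
    have hb1 : ‖(t*(s - sk k)) • y₀‖ ≤ t * η := by
      rw [norm_smul, Real.norm_eq_abs, hy₀, mul_one, abs_mul, abs_of_pos ht0]
      exact mul_le_mul_of_nonneg_left hnear ht0.le
    have hb2 : ‖(t*(1 - s)) • (y - yk k)‖ ≤ t * ρ := by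
      rw [norm_smul, Real.norm_eq_abs, abs_mul, abs_of_pos ht0]
      have h7 : |1 - s| ≤ 1 := by rw [abs_le]; constructor <;> linarith
      calc t * |1 - s| * ‖y - yk k‖ ≤ t * 1 * ρ := by
            apply mul_le_mul _ hyd (norm_nonneg _) (by positivity)
            exact mul_le_mul_of_nonneg_left h7 ht0.le
        _ = t * ρ := by ring
    have hb3 : ‖(t*(sk k - s)) • yk k‖ ≤ t * η := by
      rw [norm_smul, Real.norm_eq_abs, hyk k hk, mul_one, abs_mul, abs_of_pos ht0]
      rw [abs_sub_comm]
      exact mul_le_mul_of_nonneg_left hnear ht0.le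
    calc ‖(t*(s - sk k)) • y₀ + (t*(1 - s)) • (y - yk k) + (t*(sk k - s)) • yk k‖
        ≤ ‖(t*(s - sk k)) • y₀ + (t*(1 - s)) • (y - yk k)‖ + ‖(t*(sk k - s)) • yk k‖ :=
          norm_add_le _ _
      _ ≤ (‖(t*(s - sk k)) • y₀‖ + ‖(t*(1 - s)) • (y - yk k)‖) + ‖(t*(sk k - s)) • yk k‖ := by
          gcongr; exact norm_add_le _ _
      _ ≤ (t * η + t * ρ) + t * η := by gcongr
      _ = δ/2 := by rw [hη, hρ]; field_simp; ring
  -- disjointness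
  have hdisj : (K : Set (Fin (m+1) → ℤ)).PairwiseDisjoint (fun k => Ev k ∩ Nᶜ) := by
    intro k hk k' hk' hne
    rw [Function.onFun]
    rw [Set.disjoint_left]
    intro ω hω hω'
    have h1 := hkey k hk ω hω
    have h2 := hkey k' hk' ω hω'
    have hkk : ∃ i, k i ≠ k' i := by
      by_contra h
      push_neg at h
      exact hne (funext h)
    obtain ⟨i, hi⟩ := hkk
    have h3 : (1:ℝ) ≤ |((show EuclideanSpace ℝ (Fin (m+1)) from WithLp.toLp 2 (fun j => (k j:ℝ))) -
        (show EuclideanSpace ℝ (Fin (m+1)) from WithLp.toLp 2 (fun j => (k' j:ℝ)))) i| := by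
      have : ((show EuclideanSpace ℝ (Fin (m+1)) from WithLp.toLp 2 (fun j => (k j:ℝ))) -
          (show EuclideanSpace ℝ (Fin (m+1)) from WithLp.toLp 2 (fun j => (k' j:ℝ)))) i = ((k i - k' i : ℤ) : ℝ) := by
        push_cast; rfl
      rw [this]
      rw [← Int.cast_abs]
      exact_mod_cast Int.one_le_abs (sub_ne_zero.2 hi)
    have h4 := coord_le_norm ((show EuclideanSpace ℝ (Fin (m+1)) from WithLp.toLp 2 (fun j => (k j:ℝ))) -
        (show EuclideanSpace ℝ (Fin (m+1)) from WithLp.toLp 2 (fun j => (k' j:ℝ)))) i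
    have h5 : ‖(show EuclideanSpace ℝ (Fin (m+1)) from WithLp.toLp 2 (fun j => (k j:ℝ))) -
        (show EuclideanSpace ℝ (Fin (m+1)) from WithLp.toLp 2 (fun j => (k' j:ℝ)))‖ ≤ δ := by
      have hident : (show EuclideanSpace ℝ (Fin (m+1)) from WithLp.toLp 2 (fun j => (k j:ℝ))) -
          (show EuclideanSpace ℝ (Fin (m+1)) from WithLp.toLp 2 (fun j => (k' j:ℝ))) =
          (x₀' + (t * S ω) • y₀ + (t*(1 - S ω)) • Y ω - u -
            (show EuclideanSpace ℝ (Fin (m+1)) from WithLp.toLp 2 (fun j => (k' j:ℝ)))) -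
          (x₀' + (t * S ω) • y₀ + (t*(1 - S ω)) • Y ω - u -
            (show EuclideanSpace ℝ (Fin (m+1)) from WithLp.toLp 2 (fun j => (k j:ℝ)))) := by abel
      rw [hident]
      exact le_trans (norm_sub_le _ _) (by linarith)
    linarith [h4.trans h5]
  -- per-k lower bound
  have hmeask : ∀ k ∈ K,
      ENNReal.ofReal η * (MS⁻¹ * ENNReal.ofReal ((ρ/D)^m)) ≤ ℙ (Ev k ∩ Nᶜ) := by
    intro k hk
    have e1 : ℙ (Ev k ∩ Nᶜ) = ℙ (Ev k) := measure_inter_conull hGc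
    have e2 : ℙ (Ev k) = ℙ (S' ⁻¹' (J k)) * ℙ (Y' ⁻¹' (Metric.closedBall (yk k) ρ)) :=
      (indepFun_iff_measure_inter_preimage_eq_mul.1 hindep') _ _ (hJmeas k)
        measurableSet_closedBall
    have e3 : ℙ (S' ⁻¹' (J k)) = ENNReal.ofReal η := by
      rw [← Measure.map_apply hS'm (hJmeas k), hmapS', hJvol k hk]
    have e4 : MS⁻¹ * ENNReal.ofReal ((ρ/D)^m) ≤ ℙ (Y' ⁻¹' (Metric.closedBall (yk k) ρ)) := by
      rw [← Measure.map_apply hY'm measurableSet_closedBall, hmapY', Measure.smul_apply,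
        Measure.restrict_apply measurableSet_closedBall, smul_eq_mul, Set.inter_comm]
      apply mul_le_mul_right
      rw [← hDD]
      exact cap_lower m (yk k) (hyk k hk) ρ hρ0 hρ1
    rw [e1, e2, e3]
    exact mul_le_mul_right e4 _
  -- assembling
  have hunion : (⋃ k ∈ K, Ev k ∩ Nᶜ) ⊆ {ω | ∃ kk : Fin (m+1) → ℤ,
      ‖x₀' + (t * S ω) • y₀ + (t * (1 - S ω)) • Y ω - u -
        (show EuclideanSpace ℝ (Fin (m+1)) from WithLp.toLp 2 (fun i => (kk i : ℝ)))‖ ≤ δ} := by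
    intro ω hω
    rw [Set.mem_iUnion₂] at hω
    obtain ⟨k, hk, hωk⟩ := hω
    exact ⟨k, le_trans (hkey k hk ω hωk) (by linarith)⟩
  -- final computation
  have hrealeq : (t/D)^(m+1) * η * (ρ/D)^m = β * δ^(m+1) := by
    rw [hη, hρ, hβ]
    field_simp
    have ht' : t ^ m * t⁻¹ ^ m = 1 := by rw [← mul_pow, mul_inv_cancel₀ ht0.ne', one_pow]
    linear_combination (t * D⁻¹ * D⁻¹ ^ (m * 2) * δ * δ ^ m * (1 / 4) ^ m) * ht'
  have hreal1 : β * δ^(m+1) ≤ (K.card:ℝ) * (η * (ρ/D)^m) := by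
    have h8 : 0 ≤ η * (ρ/D)^m := by positivity
    calc β * δ^(m+1) = (t/D)^(m+1) * (η * (ρ/D)^m) := by rw [← hrealeq]; ring
      _ ≤ (K.card:ℝ) * (η * (ρ/D)^m) := mul_le_mul_of_nonneg_right hKcard h8
  calc ENNReal.ofReal (β / MS.toReal * δ^(m+1))
      = ENNReal.ofReal ((β * δ^(m+1)) / MS.toReal) := by rw [div_mul_eq_mul_div]
    _ = ENNReal.ofReal (β * δ^(m+1)) / ENNReal.ofReal MS.toReal :=
        ENNReal.ofReal_div_of_pos hMStR
    _ = ENNReal.ofReal (β * δ^(m+1)) * MS⁻¹ := by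
        rw [ENNReal.ofReal_toReal hMSfin, div_eq_mul_inv]
    _ ≤ ((K.card:ENNReal) * (ENNReal.ofReal η * ENNReal.ofReal ((ρ/D)^m))) * MS⁻¹ := by
        apply mul_le_mul_left
        calc ENNReal.ofReal (β * δ^(m+1)) ≤ ENNReal.ofReal ((K.card:ℝ) * (η * (ρ/D)^m)) :=
              ENNReal.ofReal_le_ofReal hreal1
          _ = ENNReal.ofReal (K.card:ℝ) * ENNReal.ofReal (η * (ρ/D)^m) := by
              rw [ENNReal.ofReal_mul (by positivity)]
          _ = (K.card:ENNReal) * (ENNReal.ofReal η * ENNReal.ofReal ((ρ/D)^m)) := by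
              rw [ENNReal.ofReal_natCast, ENNReal.ofReal_mul hη0.le]
    _ = (K.card:ENNReal) * (ENNReal.ofReal η * (MS⁻¹ * ENNReal.ofReal ((ρ/D)^m))) := by ring
    _ = ∑ _k ∈ K, (ENNReal.ofReal η * (MS⁻¹ * ENNReal.ofReal ((ρ/D)^m))) := by
        rw [Finset.sum_const, nsmul_eq_mul]
    _ ≤ ∑ k ∈ K, ℙ (Ev k ∩ Nᶜ) := Finset.sum_le_sum hmeask
    _ = ℙ (⋃ k ∈ K, Ev k ∩ Nᶜ) := (measure_biUnion_finset hdisj (fun k _ => hEmeas k)).symm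
    _ ≤ ℙ {ω | ∃ kk : Fin (m+1) → ℤ,
          ‖x₀' + (t * S ω) • y₀ + (t * (1 - S ω)) • Y ω - u -
            (show EuclideanSpace ℝ (Fin (m+1)) from WithLp.toLp 2 (fun i => (kk i : ℝ)))‖ ≤ δ} :=
        measure_mono hunion
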